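/- Let k ≥ 1, let m₁,…,m_{2k} be positive integers with m₁ ≥ 2, let G = Γ(m₁,…,m_{2k}) with Laplacian L, and let j be an even index with 2 ≤ j ≤ 2k. If u ∈ ℝⁿ is any vector whose coordinates vanish outside block B_j and whose coordinates sum to zero, then L·u = λ₁(j)·u, where λ₁(j) = σ_j + m_{j+2} + m_{j+4} + ⋯ + m_{2k} and σ_j = m₁+⋯+m_j. -/

import Mathlib

open Finset Matrix

/-- `sig m l = m 1 + ⋯ + m l` (block sizes `m` are indexed starting from 1). -/
def sig (m : ℕ → ℕ) (l : ℕ) : ℕ := ∑ i ∈ Finset.Icc 1 l, m i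

/-- The (1-based) index of the block containing the (0-based) vertex `v`:
`blk r m v = b` iff `sig m (b-1) ≤ v < sig m b`. -/
def blk (r : ℕ) (m : ℕ → ℕ) (v : ℕ) : ℕ :=
  1 + ((Finset.Icc 1 r).filter (fun l => sig m l ≤ v)).card

/-- `Γ(m₁,…,m_r) = ((((O_{m₁} ∨ K_{m₂}) ∪ O_{m₃}) ∨ K_{m₄}) ⋯ )`:
the odd-indexed blocks are added as sets of isolated vertices (disjoint union with `O_{m_l}`)
and the even-indexed blocks are cliques joined to everything already present.  Hence two
distinct vertices are adjacent iff the larger of their two block indices is even.  Vertices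
are labelled `0,…,n-1` (`n = m₁+⋯+m_r`), block `B₁` first, then `B₂`, etc. -/
def GammaEven (r : ℕ) (m : ℕ → ℕ) : SimpleGraph (Fin (sig m r)) where
  Adj u v := u ≠ v ∧ (max (blk r m (u : ℕ)) (blk r m (v : ℕ))) % 2 = 0
  symm := by
    constructor
    intro u v h
    exact ⟨h.1.symm, by rw [max_comm]; exact h.2⟩
  loopless := by constructor; intro u h; exact h.1 rfl

instance (r : ℕ) (m : ℕ → ℕ) : DecidableRel (GammaEven r m).Adj := fun u v =>
  decidable_of_iff (u ≠ v ∧ (max (blk r m (u : ℕ)) (blk r m (v : ℕ))) % 2 = 0) Iff.rfl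

/-- `U_t = exp(−itL)`, where `L` is the Laplacian matrix of `G` (diagonal entries the
degrees, entry `−1` for each edge, `0` otherwise). -/
noncomputable def Ut {n : ℕ} (G : SimpleGraph (Fin n)) [DecidableRel G.Adj] (t : ℝ) :
    Matrix (Fin n) (Fin n) ℂ :=
  NormedSpace.exp ((-(Complex.I * (t : ℂ))) • G.lapMatrix ℂ)

/-- The transfer probability `p_G(i,j,t) = |(U_t)_{j,i}|²`. -/
noncomputable def transferProb {n : ℕ} (G : SimpleGraph (Fin n)) [DecidableRel G.Adj]
    (i j : Fin n) (t : ℝ) : ℝ :=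
  ‖Ut G t j i‖ ^ 2

/-- `λ₀(j) = m_{j+1} + m_{j+3} + ⋯ + m_{2k}` (the indices run over `j+1, j+3, …`). -/
def lam0 (k : ℕ) (m : ℕ → ℕ) (j : ℕ) : ℕ :=
  ∑ l ∈ (Finset.Icc (j + 1) (2 * k)).filter (fun l => (l - j) % 2 = 1), m l

/-- `λ₁(j) = σ_j + m_{j+2} + m_{j+4} + ⋯ + m_{2k}` (the sum runs over `j+2, j+4, …`). -/
def lam1 (k : ℕ) (m : ℕ → ℕ) (j : ℕ) : ℕ :=
  sig m j + ∑ l ∈ (Finset.Icc (j + 2) (2 * k)).filter (fun l => (l - j) % 2 = 0), m l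

lemma sig_mono (m : ℕ → ℕ) {a b : ℕ} (h : a ≤ b) : sig m a ≤ sig m b :=
  Finset.sum_le_sum_of_subset (Finset.Icc_subset_Icc_right h)

lemma sig_succ (m : ℕ → ℕ) (l : ℕ) : sig m (l + 1) = sig m l + m (l + 1) :=
  Finset.sum_Icc_succ_top (by omega) _

lemma le_card_filter_iff (r : ℕ) (m : ℕ → ℕ) (w l : ℕ) (hl : l ≤ r) :
    l ≤ ((Finset.Icc 1 r).filter (fun i => sig m i ≤ w)).card ↔ sig m l ≤ w := by
  rcases Nat.eq_zero_or_pos l with h0 | hpos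
  · subst h0; simp [sig]
  constructor
  · intro h
    by_contra hw
    push_neg at hw
    have hsub : ((Finset.Icc 1 r).filter (fun i => sig m i ≤ w)) ⊆ Finset.Icc 1 (l - 1) := by
      intro i hi
      simp only [Finset.mem_filter, Finset.mem_Icc] at hi ⊢
      refine ⟨hi.1.1, ?_⟩
      by_contra hil
      exact absurd (le_trans (sig_mono m (show l ≤ i by omega)) hi.2) (not_le.mpr hw)
    have := Finset.card_le_card hsub
    rw [Nat.card_Icc] at this
    omega
  · intro h
    have hsub : Finset.Icc 1 l ⊆ (Finset.Icc 1 r).filter (fun i => sig m i ≤ w) := by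
      intro i hi
      simp only [Finset.mem_Icc] at hi
      simp only [Finset.mem_filter, Finset.mem_Icc]
      exact ⟨⟨hi.1, le_trans hi.2 hl⟩, le_trans (sig_mono m hi.2) h⟩
    have := Finset.card_le_card hsub
    rw [Nat.card_Icc] at this
    omega

lemma blk_le_iff (r : ℕ) (m : ℕ → ℕ) (w l : ℕ) (hl : l ≤ r) :
    blk r m w ≤ l ↔ w < sig m l := by
  have h := le_card_filter_iff r m w l hl
  rw [blk]
  omega

lemma blk_pos (r : ℕ) (m : ℕ → ℕ) (w : ℕ) : 1 ≤ blk r m w := Nat.le_add_right 1 _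

lemma blk_eq_iff (r : ℕ) (m : ℕ → ℕ) (w l : ℕ) (hl1 : 1 ≤ l) (hl : l ≤ r) :
    blk r m w = l ↔ sig m (l - 1) ≤ w ∧ w < sig m l := by
  have h1 := blk_le_iff r m w l hl
  have h2 := blk_le_iff r m w (l - 1) (by omega)
  have h3 := blk_pos r m w
  omega

lemma card_val_Ico (n a b : ℕ) (hb : b ≤ n) :
    (Finset.univ.filter fun w : Fin n => a ≤ (w : ℕ) ∧ (w : ℕ) < b).card = b - a := by
  rw [← Nat.card_Ico a b]
  refine Finset.card_bij (fun (w : Fin n) (_ : w ∈ Finset.univ.filter fun w : Fin n => a ≤ (w : ℕ) ∧ (w : ℕ) < b) => (w : ℕ)) ?_ ?_ ?_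
  · intro w hw; simp only [Finset.mem_filter] at hw; exact Finset.mem_Ico.2 hw.2
  · intro w1 _ w2 _ h; exact Fin.ext h
  · intro i hi
    rw [Finset.mem_Ico] at hi
    exact ⟨⟨i, lt_of_lt_of_le hi.2 hb⟩, by simp [hi.1, hi.2], rfl⟩

lemma card_val_lt (n b : ℕ) (hb : b ≤ n) :
    (Finset.univ.filter fun w : Fin n => (w : ℕ) < b).card = b := by
  have := card_val_Ico n 0 b hb
  rw [show (Finset.univ.filter fun w : Fin n => (w : ℕ) < b)
      = (Finset.univ.filter fun w : Fin n => 0 ≤ (w : ℕ) ∧ (w : ℕ) < b) from by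
    ext w; simp]
  omega

lemma card_blk_eq (r : ℕ) (m : ℕ → ℕ) (l : ℕ) (hl1 : 1 ≤ l) (hl : l ≤ r) :
    (Finset.univ.filter fun w : Fin (sig m r) => blk r m (w : ℕ) = l).card = m l := by
  rw [show (Finset.univ.filter fun w : Fin (sig m r) => blk r m (w : ℕ) = l)
      = (Finset.univ.filter fun w : Fin (sig m r) =>
          sig m (l - 1) ≤ (w : ℕ) ∧ (w : ℕ) < sig m l) from by
    ext w
    simp only [Finset.mem_filter, Finset.mem_univ, true_and]
    exact blk_eq_iff r m w l hl1 hl]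
  rw [card_val_Ico _ _ _ (sig_mono m hl)]
  have h := sig_succ m (l - 1)
  rw [Nat.sub_add_cancel hl1] at h
  omega

lemma gammaEven_adj (r : ℕ) (m : ℕ → ℕ) (v w : Fin (sig m r)) :
    (GammaEven r m).Adj v w ↔ v ≠ w ∧ (max (blk r m (v : ℕ)) (blk r m (w : ℕ))) % 2 = 0 :=
  Iff.rfl

/-- For `G = Γ(m₁,…,m_{2k})` with Laplacian `L`, an even index
`2 ≤ j ≤ 2k`, and any vector `u` supported on block `B_j` with coordinate sum zero,
`L·u = λ₁(j)·u` where `λ₁(j) = σ_j + m_{j+2} + m_{j+4} + ⋯ + m_{2k}`. -/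
theorem lapMatrix_mulVec_eq_lam1_smul (k : ℕ) (hk : 1 ≤ k) (m : ℕ → ℕ)
    (hm : ∀ i, 1 ≤ i → i ≤ 2 * k → 1 ≤ m i) (hm1 : 2 ≤ m 1)
    (j : ℕ) (hj1 : 2 ≤ j) (hj2 : j ≤ 2 * k) (hjeven : Even j)
    (u : Fin (sig m (2 * k)) → ℝ)
    (hsupp : ∀ v : Fin (sig m (2 * k)), blk (2 * k) m (v : ℕ) ≠ j → u v = 0)
    (hsum : ∑ v, u v = 0) :
    (GammaEven (2 * k) m).lapMatrix ℝ *ᵥ u = (lam1 k m j : ℝ) • u := by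
  have hje : j % 2 = 0 := Nat.even_iff.mp hjeven
  set S : Finset (Fin (sig m (2 * k))) :=
    Finset.univ.filter (fun w : Fin (sig m (2 * k)) => blk (2 * k) m (w : ℕ) = j) with hS
  have hsumj : ∑ w ∈ S, u w = 0 := by
    rw [hS, Finset.sum_filter_of_ne (fun x _ hx => by
      by_contra hne
      exact hx (hsupp x hne))]
    exact hsum
  funext v
  rw [SimpleGraph.lapMatrix_mulVec_apply, Pi.smul_apply, smul_eq_mul]
  have hvlt : (v : ℕ) < sig m (2 * k) := v.isLt
  have hblkv_le : blk (2 * k) m (v : ℕ) ≤ 2 * k :=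
    (blk_le_iff (2 * k) m (v : ℕ) (2 * k) le_rfl).2 hvlt
  have hblkv_pos := blk_pos (2 * k) m (v : ℕ)
  have hnbr : ∑ w ∈ (GammaEven (2 * k) m).neighborFinset v, u w
      = ∑ w ∈ ((GammaEven (2 * k) m).neighborFinset v).filter
          (fun w : Fin (sig m (2 * k)) => blk (2 * k) m (w : ℕ) = j), u w := by
    rw [Finset.sum_filter_of_ne (fun x _ hx => by
      by_contra hne
      exact hx (hsupp x hne))]
  by_cases hbv : blk (2 * k) m (v : ℕ) = j
  · -- v is in block j
    have hveq : ((GammaEven (2 * k) m).neighborFinset v).filter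
        (fun w : Fin (sig m (2 * k)) => blk (2 * k) m (w : ℕ) = j) = S.erase v := by
      ext w
      simp only [Finset.mem_filter, SimpleGraph.mem_neighborFinset, gammaEven_adj,
        Finset.mem_erase, hS, Finset.mem_univ, true_and, and_true, hbv]
      constructor
      · rintro ⟨⟨hne, _⟩, hw⟩
        exact ⟨fun h => hne h.symm, hw⟩
      · rintro ⟨hne, hw⟩
        refine ⟨⟨fun h => hne h.symm, ?_⟩, hw⟩
        rw [hw, max_self]
        exact hje
    have hvS : v ∈ S := by
      rw [hS]
      simp only [Finset.mem_filter, Finset.mem_univ, true_and]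
      exact hbv
    have hsum_erase : ∑ w ∈ S.erase v, u w = - u v := by
      rw [Finset.sum_erase_eq_sub hvS, hsumj]
      ring
    -- compute the degree
    set T : Finset (Fin (sig m (2 * k))) :=
      Finset.univ.filter (fun w : Fin (sig m (2 * k)) =>
        blk (2 * k) m (w : ℕ) ≤ j ∨ blk (2 * k) m (w : ℕ) % 2 = 0) with hT
    have hnbrT : (GammaEven (2 * k) m).neighborFinset v = T.erase v := by
      ext w
      simp only [SimpleGraph.mem_neighborFinset, gammaEven_adj, Finset.mem_erase, hT,
        Finset.mem_filter, Finset.mem_univ, true_and, hbv]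
      constructor
      · rintro ⟨hne, hmax⟩
        refine ⟨fun h => hne h.symm, ?_⟩
        rcases le_or_gt (blk (2 * k) m (w : ℕ)) j with h | h
        · exact Or.inl h
        · right; rwa [max_eq_right h.le] at hmax
      · rintro ⟨hne, hcond⟩
        refine ⟨fun h => hne h.symm, ?_⟩
        rcases le_or_gt (blk (2 * k) m (w : ℕ)) j with h' | h'
        · rw [max_eq_left h']; exact hje
        · rw [max_eq_right h'.le]
          rcases hcond with h | h
          · omega
          · exact h
    have hvT : v ∈ T := by
      rw [hT]
      simp only [Finset.mem_filter, Finset.mem_univ, true_and]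
      exact Or.inl (le_of_eq hbv)
    -- count T
    have hT1 : (Finset.univ.filter (fun w : Fin (sig m (2 * k)) =>
        blk (2 * k) m (w : ℕ) ≤ j)).card = sig m j := by
      rw [show (Finset.univ.filter (fun w : Fin (sig m (2 * k)) =>
          blk (2 * k) m (w : ℕ) ≤ j))
          = (Finset.univ.filter (fun w : Fin (sig m (2 * k)) => (w : ℕ) < sig m j)) from by
        ext w
        simp only [Finset.mem_filter, Finset.mem_univ, true_and]
        exact blk_le_iff (2 * k) m (w : ℕ) j hj2]
      exact card_val_lt _ _ (sig_mono m hj2)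
    set E : Finset ℕ := (Finset.Icc (j + 1) (2 * k)).filter (fun l => l % 2 = 0) with hE
    set T2 : Finset (Fin (sig m (2 * k))) :=
      Finset.univ.filter (fun w : Fin (sig m (2 * k)) =>
        j < blk (2 * k) m (w : ℕ) ∧ blk (2 * k) m (w : ℕ) % 2 = 0) with hT2def
    have hmap : ∀ x ∈ T2, blk (2 * k) m (x : ℕ) ∈ E := by
      intro x hx
      rw [hT2def] at hx
      simp only [Finset.mem_filter, Finset.mem_univ, true_and] at hx
      rw [hE]
      simp only [Finset.mem_filter, Finset.mem_Icc]
      exact ⟨⟨by omega, (blk_le_iff (2 * k) m (x : ℕ) (2 * k) le_rfl).2 x.isLt⟩, hx.2⟩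
    have hT2 : T2.card = ∑ l ∈ E, m l := by
      rw [Finset.card_eq_sum_card_fiberwise hmap]
      apply Finset.sum_congr rfl
      intro l hl
      rw [hE] at hl
      simp only [Finset.mem_filter, Finset.mem_Icc] at hl
      rw [show T2.filter (fun w : Fin (sig m (2 * k)) => blk (2 * k) m (w : ℕ) = l)
          = Finset.univ.filter
            (fun w : Fin (sig m (2 * k)) => blk (2 * k) m (w : ℕ) = l) from by
        ext w
        rw [hT2def]
        simp only [Finset.mem_filter, Finset.mem_univ, true_and]
        constructor
        · exact fun h => h.2
        · intro h
          exact ⟨⟨by omega, by omega⟩, h⟩]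
      exact card_blk_eq (2 * k) m l (by omega) hl.1.2
    have hTcard : T.card = sig m j + ∑ l ∈ E, m l := by
      have hTsplit : T = (Finset.univ.filter (fun w : Fin (sig m (2 * k)) =>
          blk (2 * k) m (w : ℕ) ≤ j)) ∪ T2 := by
        ext w
        rw [hT, hT2def]
        simp only [Finset.mem_union, Finset.mem_filter, Finset.mem_univ, true_and]
        omega
      have hdisj : Disjoint (Finset.univ.filter (fun w : Fin (sig m (2 * k)) =>
          blk (2 * k) m (w : ℕ) ≤ j)) T2 := by
        rw [Finset.disjoint_left]
        intro a ha hb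
        rw [hT2def] at hb
        simp only [Finset.mem_filter, Finset.mem_univ, true_and] at ha hb
        omega
      rw [hTsplit, Finset.card_union_of_disjoint hdisj, hT1, hT2]
    have hlam : lam1 k m j = sig m j + ∑ l ∈ E, m l := by
      rw [lam1]
      congr 1
      apply Finset.sum_congr _ (fun _ _ => rfl)
      rw [hE]
      ext l
      simp only [Finset.mem_filter, Finset.mem_Icc]
      omega
    have hdeg : (GammaEven (2 * k) m).degree v + 1 = lam1 k m j := by
      rw [SimpleGraph.degree, hnbrT, Finset.card_erase_of_mem hvT, hTcard, hlam]
      have : 1 ≤ T.card := Finset.card_pos.mpr ⟨v, hvT⟩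
      omega
    have hdegR : ((GammaEven (2 * k) m).degree v : ℝ) + 1 = (lam1 k m j : ℝ) := by
      exact_mod_cast congrArg (Nat.cast : ℕ → ℝ) hdeg
    rw [hnbr, hveq, hsum_erase]
    linear_combination (u v) * hdegR
  · -- v is not in block j
    have huv : u v = 0 := hsupp v hbv
    have hveq2 : ((GammaEven (2 * k) m).neighborFinset v).filter
        (fun w : Fin (sig m (2 * k)) => blk (2 * k) m (w : ℕ) = j)
        = if max (blk (2 * k) m (v : ℕ)) j % 2 = 0 then S else ∅ := by
      ext w
      simp only [Finset.mem_filter, SimpleGraph.mem_neighborFinset, gammaEven_adj]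
      by_cases hc : max (blk (2 * k) m (v : ℕ)) j % 2 = 0
      · simp only [hc, if_true, hS, Finset.mem_filter, Finset.mem_univ, true_and]
        constructor
        · exact fun h => h.2
        · intro h
          refine ⟨⟨fun he => hbv (he ▸ h), by rwa [h]⟩, h⟩
      · simp only [hc, if_false, Finset.notMem_empty, iff_false]
        rintro ⟨⟨_, hmax⟩, hw⟩
        rw [hw] at hmax
        exact hc hmax
    rw [hnbr, hveq2, huv]
    by_cases hc : max (blk (2 * k) m (v : ℕ)) j % 2 = 0 <;>
      simp [hc, hsumj]
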